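/- Let V be a finite-dimensional real vector space, η a linear functional on V, ω an alternating bilinear form on V, K := ker η ∩ rad ω, P a linear projection of V onto K, and on Ṽ := V × K* let η̃(v,α) := η(v) and ω̃((v,α),(w,β)) := ω(v,w) + α(P w) − β(P v). Then the cosymplectic orthogonal of V × {0}, namely {(v,α) ∈ Ṽ : η(v) = 0 and ω̃((v,α),(w,0)) = 0 for all w ∈ V}, equals K × {0}; in particular it is contained in V × {0}, so V × {0} is a coisotropic subspace of (Ṽ, η̃, ω̃). -/

import Mathlib

/-- The radical of a bilinear form `ω` on `V`: vectors `v` with `ω v w = 0` for all `w`. -/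
def biRadical {V : Type*} [AddCommGroup V] [Module ℝ V]
    (ω : V →ₗ[ℝ] V →ₗ[ℝ] ℝ) : Submodule ℝ V where
  carrier := {v | ∀ w, ω v w = 0}
  add_mem' := by
    intro a b ha hb w
    simp only [Set.mem_setOf_eq] at ha hb
    simp [map_add, ha w, hb w]
  zero_mem' := by intro w; simp
  smul_mem' := by
    intro c a ha w
    simp only [Set.mem_setOf_eq] at ha
    simp [ha w]

/-- The thickened form `ω̃` on `Ṽ = V × K*`:
`ω̃((v,α),(w,β)) = ω(v,w) + α(P w) − β(P v)`. -/
def thick {V : Type*} [AddCommGroup V] [Module ℝ V]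
    (ω : V →ₗ[ℝ] V →ₗ[ℝ] ℝ) (K : Submodule ℝ V) (P : V →ₗ[ℝ] V)
    (hPK : ∀ v : V, P v ∈ K) :
    (V × Module.Dual ℝ K) → (V × Module.Dual ℝ K) → ℝ :=
  fun x y => ω x.1 y.1 + x.2 ⟨P y.1, hPK y.1⟩ - y.2 ⟨P x.1, hPK x.1⟩

/-- For a pre-cosymplectic structure `(η, ω)` with `K = ker η ∩ rad ω` and `P`
a projection onto `K`, the cosymplectic orthogonal of `V × {0}` in `(Ṽ, η̃, ω̃)` equals
`K × {0}`; in particular it is contained in `V × {0}`, so `V × {0}` is coisotropic. -/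
theorem cosymplectic_thickening_coisotropic
    (V : Type*) [AddCommGroup V] [Module ℝ V] [FiniteDimensional ℝ V]
    (η : V →ₗ[ℝ] ℝ)
    (ω : V →ₗ[ℝ] V →ₗ[ℝ] ℝ) (halt : ∀ v, ω v v = 0)
    (P : V →ₗ[ℝ] V) (hidem : P ∘ₗ P = P)
    (hPK : ∀ v : V, P v ∈ LinearMap.ker η ⊓ biRadical ω)
    (hrange : LinearMap.range P = LinearMap.ker η ⊓ biRadical ω) :
    ({x : V × Module.Dual ℝ ↥(LinearMap.ker η ⊓ biRadical ω) |
        η x.1 = 0 ∧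
          ∀ w : V, thick ω (LinearMap.ker η ⊓ biRadical ω) P hPK x (w, 0) = 0}
      = {x : V × Module.Dual ℝ ↥(LinearMap.ker η ⊓ biRadical ω) |
          x.1 ∈ LinearMap.ker η ⊓ biRadical ω ∧ x.2 = 0}) ∧
    ({x : V × Module.Dual ℝ ↥(LinearMap.ker η ⊓ biRadical ω) |
        η x.1 = 0 ∧
          ∀ w : V, thick ω (LinearMap.ker η ⊓ biRadical ω) P hPK x (w, 0) = 0}
      ⊆ {x : V × Module.Dual ℝ ↥(LinearMap.ker η ⊓ biRadical ω) | x.2 = 0}) := by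
  set K := LinearMap.ker η ⊓ biRadical ω with hK
  -- antisymmetry
  have hanti : ∀ v w, ω v w = - ω w v := by
    intro v w
    have h := halt (v + w)
    simp only [map_add, LinearMap.add_apply, halt v, halt w] at h
    linarith
  -- P fixes K
  have hPfix : ∀ k : V, k ∈ K → P k = k := by
    intro k hk
    rw [← hrange] at hk
    obtain ⟨u, hu⟩ := hk
    have := congrArg (fun f => f u) hidem
    simpa [LinearMap.comp_apply, hu] using this
  have key : ∀ x : V × Module.Dual ℝ ↥K,
      (η x.1 = 0 ∧ ∀ w : V, thick ω K P hPK x (w, 0) = 0) ↔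
      (x.1 ∈ K ∧ x.2 = 0) := by
    rintro ⟨v, α⟩
    constructor
    · rintro ⟨hη, hω⟩
      have hα : α = 0 := by
        ext k
        have h := hω k
        simp only [thick] at h
        have hrad : ω v k = 0 := by
          rw [hanti]
          simp [k.2.2 v]
        have hPk : P (k : V) = (k : V) := hPfix k k.2
        have : α ⟨P (k : V), hPK k⟩ = 0 := by
          simpa [hrad] using h
        convert this using 2
        exact Subtype.ext hPk.symm
        simp
      refine ⟨?_, hα⟩
      refine ⟨hη, fun w => ?_⟩
      have h := hω w
      simp only [thick, hα] at h
      simpa using h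
    · rintro ⟨hv, hα⟩
      refine ⟨hv.1, fun w => ?_⟩
      have hα' : α = 0 := hα
      simp only [thick, hα']
      have : ω v w = 0 := hv.2 w
      simp [this]
  constructor
  · ext x
    exact key x
  · intro x hx
    exact ((key x).mp hx).2
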